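/- Suppose φ : ℝ → ℝ is incrementally sector bounded by [α, β] on ℝ, P ∈ ℝ^{n×n} is symmetric positive definite, and there exist constants 0 < p̲ ≤ p̄ and μ > 0 with p̲·I ⪯ P ⪯ p̄·I such that, with L = P·W² + (α+β)·W¹ᵀ, the symmetric block matrix [[−μ·Iₙ, P, 0], [P, AᵀP + PA − 2αβ·W¹ᵀW¹, L], [0, Lᵀ, −2·I_m]] ⪯ 0. Then any two solutions x₁, x₂ of the Hopfield NODE system satisfy ‖x₁(t) − x₂(t)‖ ≤ √(p̄/p̲) · e^{−(p̲/(2μ))·t} · ‖x₁(0) − x₂(0)‖ for all t ≥ 0. -/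

import Mathlib

open Matrix

/-- The Euclidean norm of a vector in `ℝⁿ`. -/
noncomputable def eNorm {n : ℕ} (v : Fin n → ℝ) : ℝ := Real.sqrt (v ⬝ᵥ v)

private lemma dot_tr {n m : ℕ} (M : Matrix (Fin n) (Fin m) ℝ)
    (v : Fin m → ℝ) (y : Fin n → ℝ) : v ⬝ᵥ (Mᵀ *ᵥ y) = (M *ᵥ v) ⬝ᵥ y := by
  rw [dotProduct_comm v, Matrix.mulVec_transpose, ← Matrix.dotProduct_mulVec, dotProduct_comm y]

private lemma dot_self_nonneg' {k : ℕ} (v : Fin k → ℝ) : 0 ≤ v ⬝ᵥ v :=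
  Finset.sum_nonneg fun _ _ => mul_self_nonneg _

private lemma hasDerivAt_comp_proj {n : ℕ} (f : ℝ → Fin n → ℝ) (df : Fin n → ℝ) (s : ℝ)
    (i : Fin n) (h : HasDerivAt f df s) : HasDerivAt (fun r => f r i) (df i) s :=
  (ContinuousLinearMap.proj (R := ℝ) (φ := fun _ : Fin n => ℝ) i).hasFDerivAt.comp_hasDerivAt s h

/-- Theorem 2: contraction of the Hopfield NODE system under the
convex LMI condition. -/
theorem hopfield_node_contractive_LMI
    (n m : ℕ) (A : Matrix (Fin n) (Fin n) ℝ)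
    (W1 : Matrix (Fin m) (Fin n) ℝ) (W2 : Matrix (Fin n) (Fin m) ℝ)
    (b1 : Fin m → ℝ) (b2 : Fin n → ℝ)
    (φ : ℝ → ℝ) (α β : ℝ)
    (hsec : ∀ a c : ℝ, (φ a - φ c - α * (a - c)) * (φ a - φ c - β * (a - c)) ≤ 0)
    (P : Matrix (Fin n) (Fin n) ℝ) (hP : P.PosDef)
    (p₁ p₂ μ : ℝ) (hp₁ : 0 < p₁) (hp₁₂ : p₁ ≤ p₂) (hμ : 0 < μ)
    (hPlo : (P - p₁ • (1 : Matrix (Fin n) (Fin n) ℝ)).PosSemidef)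
    (hPhi : (p₂ • (1 : Matrix (Fin n) (Fin n) ℝ) - P).PosSemidef)
    (hLMI : (-(Matrix.fromBlocks
        (Matrix.fromBlocks (-μ • (1 : Matrix (Fin n) (Fin n) ℝ)) P
          P (Aᵀ * P + P * A - (2 * α * β) • (W1ᵀ * W1)))
        (Matrix.fromRows (0 : Matrix (Fin n) (Fin m) ℝ) (P * W2 + (α + β) • W1ᵀ))
        (Matrix.fromCols (0 : Matrix (Fin m) (Fin n) ℝ) ((P * W2 + (α + β) • W1ᵀ)ᵀ))
        (-(2 : ℝ) • (1 : Matrix (Fin m) (Fin m) ℝ)))).PosSemidef)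
    (x₁ x₂ : ℝ → Fin n → ℝ)
    (hx₁ : ∀ t, 0 ≤ t → HasDerivAt x₁
      (A.mulVec (x₁ t) + W2.mulVec (fun j => φ (W1.mulVec (x₁ t) j + b1 j)) + b2) t)
    (hx₂ : ∀ t, 0 ≤ t → HasDerivAt x₂
      (A.mulVec (x₂ t) + W2.mulVec (fun j => φ (W1.mulVec (x₂ t) j + b1 j)) + b2) t) :
    ∀ t, 0 ≤ t →
      eNorm (x₁ t - x₂ t) ≤
        Real.sqrt (p₂ / p₁) * Real.exp (-(p₁ / (2 * μ)) * t) * eNorm (x₁ 0 - x₂ 0) := by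
  have hμ0 : μ ≠ 0 := ne_of_gt hμ
  have hPt : Pᵀ = P := by
    ext i j
    have := congrFun (congrFun hP.1 i) j
    simpa using this
  have dsym : ∀ (v y : Fin n → ℝ), v ⬝ᵥ (P *ᵥ y) = (P *ᵥ v) ⬝ᵥ y := by
    intro v y
    conv_lhs => rw [← hPt]
    exact dot_tr P v y
  set e : ℝ → Fin n → ℝ := fun s => x₁ s - x₂ s with he
  set u : ℝ → Fin m → ℝ := fun s =>
    (fun j => φ ((W1 *ᵥ x₁ s) j + b1 j)) - (fun j => φ ((W1 *ᵥ x₂ s) j + b1 j)) with hu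
  set d : ℝ → Fin n → ℝ := fun s => A *ᵥ e s + W2 *ᵥ u s with hd
  set V : ℝ → ℝ := fun s => e s ⬝ᵥ (P *ᵥ e s) with hV
  set V' : ℝ → ℝ := fun s => d s ⬝ᵥ (P *ᵥ e s) + e s ⬝ᵥ (P *ᵥ d s) with hV'
  -- derivative of the error
  have hde : ∀ s, 0 ≤ s → HasDerivAt e (d s) s := by
    intro s hs
    have h := (hx₁ s hs).sub (hx₂ s hs)
    convert h using 1
    show A *ᵥ (x₁ s - x₂ s) + W2 *ᵥ
        ((fun j => φ ((W1 *ᵥ x₁ s) j + b1 j)) - (fun j => φ ((W1 *ᵥ x₂ s) j + b1 j))) = _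
    simp only [Matrix.mulVec_sub]
    abel
    all_goals rfl
  -- derivative of the Lyapunov function
  have hdV : ∀ s, 0 ≤ s → HasDerivAt V (V' s) s := by
    intro s hs
    have hei : ∀ i, HasDerivAt (fun r => e r i) (d s i) s :=
      fun i => hasDerivAt_comp_proj e (d s) s i (hde s hs)
    have H : HasDerivAt (fun r => ∑ i, ∑ j, (e r i) * (P i j * e r j))
        (∑ i, ∑ j, (d s i * (P i j * e s j) + e s i * (P i j * d s j))) s := by
      apply HasDerivAt.fun_sum; intro i _
      apply HasDerivAt.fun_sum; intro j _
      exact (hei i).mul ((hei j).const_mul (P i j))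
    convert H using 1
    · funext r
      simp [hV, dotProduct, Matrix.mulVec, Finset.mul_sum]
    · simp [hV', hd, dotProduct, Matrix.mulVec, Finset.mul_sum, Finset.sum_add_distrib]
  -- the key differential inequality
  have hkey : ∀ s, 0 ≤ s → V' s ≤ -(p₁ / μ) * V s := by
    intro s hs
    -- sector bound, summed
    have hsector : (u s ⬝ᵥ u s) - (α + β) * ((W1 *ᵥ e s) ⬝ᵥ u s)
        + α * β * ((W1 *ᵥ e s) ⬝ᵥ (W1 *ᵥ e s)) ≤ 0 := by
      have hptw : ∀ j : Fin m, u s j * u s j - (α + β) * ((W1 *ᵥ e s) j * u s j)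
          + α * β * ((W1 *ᵥ e s) j * (W1 *ᵥ e s) j) ≤ 0 := by
        intro j
        have h := hsec ((W1 *ᵥ x₁ s) j + b1 j) ((W1 *ᵥ x₂ s) j + b1 j)
        have h1 : u s j = φ ((W1 *ᵥ x₁ s) j + b1 j) - φ ((W1 *ᵥ x₂ s) j + b1 j) := rfl
        have h2 : (W1 *ᵥ e s) j = ((W1 *ᵥ x₁ s) j + b1 j) - ((W1 *ᵥ x₂ s) j + b1 j) := by
          show (W1 *ᵥ (x₁ s - x₂ s)) j = _
          rw [Matrix.mulVec_sub, Pi.sub_apply]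
          ring
        rw [h1, h2]; nlinarith [h]
      calc (u s ⬝ᵥ u s) - (α + β) * ((W1 *ᵥ e s) ⬝ᵥ u s)
            + α * β * ((W1 *ᵥ e s) ⬝ᵥ (W1 *ᵥ e s))
          = ∑ j, (u s j * u s j - (α + β) * ((W1 *ᵥ e s) j * u s j)
              + α * β * ((W1 *ᵥ e s) j * (W1 *ᵥ e s) j)) := by
            simp [dotProduct, Finset.mul_sum, Finset.sum_add_distrib, Finset.sum_sub_distrib]
        _ ≤ 0 := Finset.sum_nonpos fun j _ => hptw j
    -- the LMI applied to the stacked vector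
    set w : Fin n → ℝ := μ⁻¹ • (P *ᵥ e s) with hw
    have h00 := hLMI.dotProduct_mulVec_nonneg (Sum.elim (Sum.elim w (e s)) (u s))
    rw [Matrix.neg_mulVec, dotProduct_neg] at h00
    have h0 : (Sum.elim (Sum.elim w (e s)) (u s)) ⬝ᵥ ((Matrix.fromBlocks
        (Matrix.fromBlocks (-μ • (1 : Matrix (Fin n) (Fin n) ℝ)) P
          P (Aᵀ * P + P * A - (2 * α * β) • (W1ᵀ * W1)))
        (Matrix.fromRows (0 : Matrix (Fin n) (Fin m) ℝ) (P * W2 + (α + β) • W1ᵀ))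
        (Matrix.fromCols (0 : Matrix (Fin m) (Fin n) ℝ) ((P * W2 + (α + β) • W1ᵀ)ᵀ))
        (-(2 : ℝ) • (1 : Matrix (Fin m) (Fin m) ℝ))) *ᵥ (Sum.elim (Sum.elim w (e s)) (u s))) ≤ 0 := by
      rw [← neg_nonneg]
      simpa using h00
    simp only [Matrix.fromBlocks_mulVec, Matrix.fromRows_mulVec,
      Matrix.fromCols_mulVec_sumElim, sumElim_dotProduct_sumElim,
      Matrix.add_mulVec, Matrix.sub_mulVec, Matrix.smul_mulVec, Matrix.one_mulVec,
      Matrix.neg_mulVec, Matrix.zero_mulVec, Matrix.mulVec_zero, ← Matrix.mulVec_mulVec,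
      Matrix.transpose_add, Matrix.transpose_smul, Matrix.transpose_transpose,
      Matrix.transpose_mul, hPt,
      dotProduct_add, dotProduct_neg, dotProduct_smul, smul_eq_mul, neg_smul, zero_add,
      add_zero, Sum.elim_comp_inl, Sum.elim_comp_inr, dotProduct_sub, dotProduct_zero,
      hw, Matrix.mulVec_smul, smul_dotProduct,
      mul_neg, mul_zero, inv_mul_cancel_left₀ hμ0] at h0
    -- rewrite all atoms
    have E1 : e s ⬝ᵥ (P *ᵥ (P *ᵥ e s)) = (P *ᵥ e s) ⬝ᵥ (P *ᵥ e s) := dsym (e s) (P *ᵥ e s)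
    have E2 : u s ⬝ᵥ (W2ᵀ *ᵥ (P *ᵥ e s)) = (W2 *ᵥ u s) ⬝ᵥ (P *ᵥ e s) := dot_tr _ _ _
    have E4 : e s ⬝ᵥ (Aᵀ *ᵥ (P *ᵥ e s)) = (A *ᵥ e s) ⬝ᵥ (P *ᵥ e s) := dot_tr _ _ _
    have E5 : e s ⬝ᵥ (P *ᵥ (A *ᵥ e s)) = (A *ᵥ e s) ⬝ᵥ (P *ᵥ e s) :=
      (dsym (e s) (A *ᵥ e s)).trans (dotProduct_comm _ _)
    have E6 : e s ⬝ᵥ (W1ᵀ *ᵥ (W1 *ᵥ e s)) = (W1 *ᵥ e s) ⬝ᵥ (W1 *ᵥ e s) := dot_tr _ _ _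
    have E7 : u s ⬝ᵥ (W1 *ᵥ e s) = (W1 *ᵥ e s) ⬝ᵥ u s := dotProduct_comm _ _
    have E8 : e s ⬝ᵥ (P *ᵥ (W2 *ᵥ u s)) = (W2 *ᵥ u s) ⬝ᵥ (P *ᵥ e s) :=
      (dsym (e s) (W2 *ᵥ u s)).trans (dotProduct_comm _ _)
    have E9 : e s ⬝ᵥ (W1ᵀ *ᵥ u s) = (W1 *ᵥ e s) ⬝ᵥ u s := dot_tr _ _ _
    rw [E1, E2, E4, E5, E6, E7, E8, E9] at h0
    -- lower bound on ‖P e‖²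
    have hc : p₁ * (e s ⬝ᵥ (P *ᵥ e s)) ≤ (P *ᵥ e s) ⬝ᵥ (P *ᵥ e s) := by
      set Q : Matrix (Fin n) (Fin n) ℝ := P - p₁ • (1 : Matrix (Fin n) (Fin n) ℝ) with hQ
      have hq1 : 0 ≤ e s ⬝ᵥ (Q *ᵥ e s) := by simpa using hPlo.dotProduct_mulVec_nonneg (e s)
      have hq2 : 0 ≤ (Q *ᵥ e s) ⬝ᵥ (Q *ᵥ e s) := dot_self_nonneg' _
      have hq3 : P *ᵥ e s = Q *ᵥ e s + p₁ • e s := by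
        rw [hQ, Matrix.sub_mulVec, Matrix.smul_mulVec, Matrix.one_mulVec]
        abel
      have hcm : (Q *ᵥ e s) ⬝ᵥ e s = e s ⬝ᵥ (Q *ᵥ e s) := dotProduct_comm _ _
      rw [hq3]
      simp only [dotProduct_add, add_dotProduct, dotProduct_smul, smul_dotProduct, smul_eq_mul]
      rw [hcm]
      have hq4 : 0 ≤ p₁ * (e s ⬝ᵥ (Q *ᵥ e s)) := mul_nonneg hp₁.le hq1
      nlinarith [hq2, hq4]
    have hμi : (0:ℝ) ≤ μ⁻¹ := inv_nonneg.2 hμ.le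
    have hμc : μ⁻¹ * (p₁ * (e s ⬝ᵥ (P *ᵥ e s))) ≤ μ⁻¹ * ((P *ᵥ e s) ⬝ᵥ (P *ᵥ e s)) :=
      mul_le_mul_of_nonneg_left hc hμi
    show d s ⬝ᵥ (P *ᵥ e s) + e s ⬝ᵥ (P *ᵥ d s) ≤ -(p₁ / μ) * (e s ⬝ᵥ (P *ᵥ e s))
    have hVeq : d s ⬝ᵥ (P *ᵥ e s) + e s ⬝ᵥ (P *ᵥ d s)
        = 2 * ((A *ᵥ e s) ⬝ᵥ (P *ᵥ e s)) + 2 * ((W2 *ᵥ u s) ⬝ᵥ (P *ᵥ e s)) := by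
      show (A *ᵥ e s + W2 *ᵥ u s) ⬝ᵥ (P *ᵥ e s)
          + e s ⬝ᵥ (P *ᵥ (A *ᵥ e s + W2 *ᵥ u s)) = _
      simp only [Matrix.mulVec_add, add_dotProduct, dotProduct_add]
      rw [E5, E8]
      ring
    rw [hVeq]
    have hdiv : -(p₁ / μ) * (e s ⬝ᵥ (P *ᵥ e s))
        = -(μ⁻¹ * (p₁ * (e s ⬝ᵥ (P *ᵥ e s)))) := by
      rw [div_eq_mul_inv]; ring
    rw [hdiv]
    linarith [h0, hsector, hμc]
  -- Gronwall / monotonicity argument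
  set k : ℝ := p₁ / μ with hk
  set g : ℝ → ℝ := fun s => V s * Real.exp (k * s) with hg
  have hdg : ∀ s, 0 ≤ s →
      HasDerivAt g (V' s * Real.exp (k * s) + V s * (k * Real.exp (k * s))) s := by
    intro s hs
    have h1 : HasDerivAt (fun r : ℝ => Real.exp (k * r)) (Real.exp (k * s) * k) s := by
      have := ((hasDerivAt_id s).const_mul k).exp
      simpa using this
    have h2 := (hdV s hs).mul h1
    convert h2 using 1
    rfl
    rfl
    rfl
    ring
  have hanti : AntitoneOn g (Set.Ici (0:ℝ)) := by
    apply antitoneOn_of_deriv_nonpos (convex_Ici 0)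
    · intro s hs
      exact ((hdg s hs).continuousAt).continuousWithinAt
    · intro s hs
      rw [interior_Ici] at hs
      exact (hdg s (le_of_lt hs)).differentiableAt.differentiableWithinAt
    · intro s hs
      rw [interior_Ici] at hs
      rw [(hdg s (le_of_lt hs)).deriv]
      have h1 := hkey s (le_of_lt hs)
      have h3 := mul_le_mul_of_nonneg_right h1 (Real.exp_pos (k * s)).le
      have h4 : -(p₁ / μ) * V s * Real.exp (k * s) = -(k * (V s * Real.exp (k * s))) := by
        rw [hk]; ring
      rw [h4] at h3
      nlinarith [h3]
  intro t ht
  have hVt : V t * Real.exp (k * t) ≤ V 0 := by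
    have := hanti Set.self_mem_Ici ht ht
    simpa [hg] using this
  -- bounds from P's spectral bounds
  have hlow : p₁ * (e t ⬝ᵥ e t) ≤ V t := by
    have h := hPlo.dotProduct_mulVec_nonneg (e t)
    simp only [star_trivial, Matrix.sub_mulVec, Matrix.smul_mulVec, Matrix.one_mulVec,
      dotProduct_sub, dotProduct_smul, smul_eq_mul] at h
    show p₁ * (e t ⬝ᵥ e t) ≤ e t ⬝ᵥ (P *ᵥ e t)
    linarith
  have hhigh : V 0 ≤ p₂ * (e 0 ⬝ᵥ e 0) := by
    have h := hPhi.dotProduct_mulVec_nonneg (e 0)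
    simp only [star_trivial, Matrix.sub_mulVec, Matrix.smul_mulVec, Matrix.one_mulVec,
      dotProduct_sub, dotProduct_smul, smul_eq_mul] at h
    show e 0 ⬝ᵥ (P *ᵥ e 0) ≤ p₂ * (e 0 ⬝ᵥ e 0)
    linarith
  have hexp : (0:ℝ) < Real.exp (k * t) := Real.exp_pos _
  have hEE : Real.exp (k * t) * Real.exp (-k * t) = 1 := by
    rw [← Real.exp_add]; ring_nf; exact Real.exp_zero
  have h1 : V t ≤ V 0 * Real.exp (-k * t) := by
    have h5 := mul_le_mul_of_nonneg_right hVt (Real.exp_pos (-k * t)).le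
    calc V t = V t * (Real.exp (k * t) * Real.exp (-k * t)) := by rw [hEE, mul_one]
      _ = V t * Real.exp (k * t) * Real.exp (-k * t) := by ring
      _ ≤ V 0 * Real.exp (-k * t) := h5
  have hmain : e t ⬝ᵥ e t ≤ (p₂ / p₁) * Real.exp (-k * t) * (e 0 ⬝ᵥ e 0) := by
    have h2 : p₁ * (e t ⬝ᵥ e t) ≤ p₂ * (e 0 ⬝ᵥ e 0) * Real.exp (-k * t) :=
      calc p₁ * (e t ⬝ᵥ e t) ≤ V t := hlow
        _ ≤ V 0 * Real.exp (-k * t) := h1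
        _ ≤ p₂ * (e 0 ⬝ᵥ e 0) * Real.exp (-k * t) :=
          mul_le_mul_of_nonneg_right hhigh (Real.exp_pos _).le
    rw [div_mul_eq_mul_div, div_mul_eq_mul_div, le_div_iff₀ hp₁]
    nlinarith [h2]
  have hp₂ : (0:ℝ) < p₂ := lt_of_lt_of_le hp₁ hp₁₂
  have hnn : (0:ℝ) ≤ (p₂ / p₁) * Real.exp (-k * t) :=
    mul_nonneg (div_nonneg hp₂.le hp₁.le) (Real.exp_pos _).le
  have hsq := Real.sqrt_le_sqrt hmain
  rw [show eNorm (x₁ t - x₂ t) = Real.sqrt (e t ⬝ᵥ e t) from rfl]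
  rw [show eNorm (x₁ 0 - x₂ 0) = Real.sqrt (e 0 ⬝ᵥ e 0) from rfl]
  have h2μ : p₁ / (2 * μ) = p₁ / μ / 2 := by rw [div_div, mul_comm]
  have harg : -k * t / 2 = -(p₁ / (2 * μ)) * t := by
    rw [h2μ, hk]; ring
  calc Real.sqrt (e t ⬝ᵥ e t)
      ≤ Real.sqrt ((p₂ / p₁) * Real.exp (-k * t) * (e 0 ⬝ᵥ e 0)) := hsq
    _ = Real.sqrt (p₂ / p₁) * Real.sqrt (Real.exp (-k * t)) * Real.sqrt (e 0 ⬝ᵥ e 0) := by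
        rw [Real.sqrt_mul hnn, Real.sqrt_mul (div_nonneg hp₂.le hp₁.le)]
    _ = Real.sqrt (p₂ / p₁) * Real.exp (-(p₁ / (2 * μ)) * t) * Real.sqrt (e 0 ⬝ᵥ e 0) := by
        rw [← Real.exp_half, harg]
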